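/- Let M and N be positive integers. Then Σ ∏_{i=1}^{l} (-1)^{m_i - 1} · C(N, m_i) = C(M + N - 1, M), where the sum ranges over all compositions (m_1, …, m_l) of M (of all lengths l ≥ 1). -/

import Mathlib

set_option maxRecDepth 4000

open Finset PowerSeries

/-- Prepend a block of size `k+1` to a composition of `m - k`. -/
def consComp (m : ℕ) (k : Fin (m + 1)) (c : Composition (m - k)) : Composition (m + 1) :=
  ⟨((k : ℕ) + 1) :: c.blocks,
   by
     intro i hi
     rcases List.mem_cons.1 hi with h | h
     · omega
     · exact c.blocks_pos h,
   by
     have := c.blocks_sum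
     have hk := k.isLt
     simp [this]
     omega⟩

lemma consComp_bijective (m : ℕ) :
    Function.Bijective (fun x : Σ k : Fin (m + 1), Composition (m - k) => consComp m x.1 x.2) := by
  constructor
  · rintro ⟨k, c⟩ ⟨k', c'⟩ h
    have hb : ((k : ℕ) + 1) :: c.blocks = ((k' : ℕ) + 1) :: c'.blocks :=
      congrArg Composition.blocks h
    have hk : k = k' := by
      apply Fin.ext
      have := List.head_eq_of_cons_eq hb
      omega
    subst hk
    have hc : c = c' := Composition.ext (List.tail_eq_of_cons_eq hb)
    rw [hc]
  · intro c
    obtain ⟨b, t, hbt⟩ : ∃ b t, c.blocks = b :: t := by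
      cases h : c.blocks with
      | nil => exfalso; have := c.blocks_sum; rw [h] at this; simp at this
      | cons b t => exact ⟨b, t, rfl⟩
    have hbpos : 0 < b := c.blocks_pos (by rw [hbt]; exact List.mem_cons_self)
    have hsum : b + t.sum = m + 1 := by have := c.blocks_sum; rw [hbt] at this; simpa using this
    have hble : b - 1 < m + 1 := by omega
    refine ⟨⟨⟨b - 1, hble⟩, ⟨t, ?_, ?_⟩⟩, ?_⟩
    · intro i hi; exact c.blocks_pos (by rw [hbt]; exact List.mem_cons_of_mem _ hi)
    · simp; omega
    · apply Composition.ext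
      simp [consComp, hbt]
      omega

lemma sum_composition_succ (f : ℕ → ℤ) (m : ℕ) :
    ∑ c : Composition (m + 1), (c.blocks.map f).prod =
      ∑ k ∈ Finset.range (m + 1),
        f (k + 1) * ∑ c : Composition (m - k), (c.blocks.map f).prod := by
  rw [← Fin.sum_univ_eq_sum_range (fun k => f (k + 1) * ∑ c : Composition (m - k), (c.blocks.map f).prod)]
  rw [← Fintype.sum_bijective _ (consComp_bijective m)
    (fun x => f ((x.1 : ℕ) + 1) * (x.2.blocks.map f).prod)
    (fun c => (c.blocks.map f).prod)
    (by rintro ⟨k, c⟩; simp [consComp])]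
  rw [← Finset.univ_sigma_univ, Finset.sum_sigma]
  simp [Finset.mul_sum]

lemma coeff_one_sub_pow (n q : ℕ) :
    (PowerSeries.coeff (R := ℤ) q) ((1 - PowerSeries.X) ^ n) = (-1) ^ q * (n.choose q : ℤ) := by
  have h : ((1 : ℤ⟦X⟧) - X) ^ n = ∑ k ∈ range (n + 1), (-X) ^ k * 1 ^ (n - k) * (n.choose k : ℤ⟦X⟧) := by
    rw [← Commute.add_pow (Commute.one_right (-X : ℤ⟦X⟧))]
    ring_nf
  have hneg : ∀ k : ℕ, ((-X : ℤ⟦X⟧)) ^ k * 1 ^ (n-k) * (n.choose k : ℤ⟦X⟧)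
      = ((-1)^k * (n.choose k : ℤ)) • (X ^ k : ℤ⟦X⟧) := by
    intro k
    rw [neg_pow]
    simp [smul_eq_C_mul]
    ring
  rw [h]
  simp only [hneg, map_sum, map_smul, LinearMap.map_smul_of_tower, PowerSeries.coeff_X_pow, smul_eq_mul]
  by_cases hq : q ≤ n
  · rw [Finset.sum_eq_single q]
    · simp
    · intro b _ hb
      rw [if_neg (fun h => hb h.symm)]
      simp
    · intro h'; exact absurd (mem_range.2 (by omega)) h'
  · rw [Finset.sum_eq_zero, Nat.choose_eq_zero_of_lt (by omega)]
    · simp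
    · intro b hb
      have : b ≠ q := by simp at hb; omega
      rw [if_neg (fun h => this h.symm)]
      simp

/-- The key convolution identity from `(1-X)^{-(d+1)} * (1-X)^{d+1} = 1`. -/
lemma key_identity (d m : ℕ) :
    ∑ k ∈ range (m + 1), (-1 : ℤ) ^ k * ((d + 1).choose (k + 1) : ℤ) * ((d + (m - k)).choose d : ℤ) =
      ((d + (m + 1)).choose d : ℤ) := by
  have h := PowerSeries.mk_add_choose_mul_one_sub_pow_eq_one (S := ℤ) (d := d)
  have h2 := congrArg (PowerSeries.coeff (R := ℤ) (m + 1)) h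
  rw [PowerSeries.coeff_mul] at h2
  simp only [PowerSeries.coeff_one, PowerSeries.coeff_mk, coeff_one_sub_pow] at h2
  rw [Finset.Nat.sum_antidiagonal_eq_sum_range_succ
    (f := fun p q => ((d + p).choose d : ℤ) * ((-1) ^ q * ((d + 1).choose q : ℤ)))] at h2
  rw [Finset.sum_range_succ] at h2
  rw [← Finset.sum_range_reflect] at h2
  have h3 : ∀ j ∈ range (m + 1),
      ((d + (m + 1 - 1 - j)).choose d : ℤ) *
          ((-1) ^ (m + 1 - (m + 1 - 1 - j)) * ((d + 1).choose (m + 1 - (m + 1 - 1 - j)) : ℤ)) =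
        -((-1 : ℤ) ^ j * ((d + 1).choose (j + 1) : ℤ) * ((d + (m - j)).choose d : ℤ)) := by
    intro j hj
    have hj' : j ≤ m := by simp at hj; omega
    have e1 : m + 1 - 1 - j = m - j := by omega
    have e2 : m + 1 - (m - j) = j + 1 := by omega
    rw [e1, e2, pow_succ]
    ring
  rw [Finset.sum_congr rfl h3, Finset.sum_neg_distrib] at h2
  simp only [Nat.sub_self, pow_zero, Nat.choose_zero_right, Nat.cast_one, mul_one, one_mul,
    if_neg (Nat.succ_ne_zero m)] at h2
  linarith

theorem sum_compositions_signed_binomial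
    (M N : ℕ) (hM : 0 < M) (hN : 0 < N) :
    ∑ c : Composition M,
        (c.blocks.map fun mi => (-1 : ℤ) ^ (mi - 1) * (N.choose mi : ℤ)).prod =
      ((M + N - 1).choose M : ℤ) := by
  obtain ⟨d, rfl⟩ : ∃ d, N = d + 1 := ⟨N - 1, by omega⟩
  clear hM hN
  induction M using Nat.strong_induction_on with
  | _ M ih =>
    match M with
    | 0 =>
      have hone : ∀ c : Composition 0,
          (c.blocks.map fun mi => (-1 : ℤ) ^ (mi - 1) * ((d+1).choose mi : ℤ)).prod = 1 := by
        intro c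
        have hb : c.blocks = [] := by
          cases h : c.blocks with
          | nil => rfl
          | cons b t =>
            exfalso
            have hs := c.blocks_sum
            rw [h] at hs
            have hbp : 0 < b := c.blocks_pos (by rw [h]; exact List.mem_cons_self)
            simp at hs
            omega
        rw [hb]
        simp
      rw [Finset.sum_congr rfl (fun c _ => hone c), Finset.sum_const]
      simp [composition_card]
    | m + 1 =>
      rw [sum_composition_succ]
      have hstep : ∀ k ∈ range (m + 1),
          ((fun mi => (-1 : ℤ) ^ (mi - 1) * ((d+1).choose mi : ℤ)) (k + 1)) *
            ∑ c : Composition (m - k), (c.blocks.map fun mi => (-1 : ℤ) ^ (mi - 1) * ((d+1).choose mi : ℤ)).prod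
          = (-1 : ℤ) ^ k * ((d + 1).choose (k + 1) : ℤ) * ((d + (m - k)).choose d : ℤ) := by
        intro k hk
        rw [ih (m - k) (by simp at hk; omega)]
        have e1 : (m - k) + (d + 1) - 1 = (m - k) + d := by omega
        rw [e1, Nat.choose_symm_add, Nat.add_comm (m - k) d]
        push_cast
        ring
      rw [Finset.sum_congr rfl hstep, key_identity]
      have e3 : (m + 1) + (d + 1) - 1 = d + (m + 1) := by omega
      rw [e3]
      exact_mod_cast congrArg (Nat.cast (R := ℤ)) (Nat.choose_symm_add (a := d) (b := m + 1))
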